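/- arXiv:2003.07230 — 2 statements merged into one kernel-verified Lean document; each statement's English description precedes it below -/
import Mathlib

section
/- Let R be a commutative ring, A and B ideals, n ≥ 3. Suppose i ≠ j and a ∈ A, b ∈ B. Then for any k ∉ {i,j} and any c ∈ R, the matrix Eᵢₖ(c) commutes with [Eᵢⱼ(a), Eⱼᵢ(b)] modulo E(n,R,AB); i.e., the commutator [Eᵢₖ(c), [Eᵢⱼ(a), Eⱼᵢ(b)]] lies in E(n,R,AB). -/
open scoped commutatorElement

def elemSL (n : ℕ) (R : Type*) [CommRing R] (i j : Fin n) (hij : i ≠ j) (t : R) :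
    Matrix.SpecialLinearGroup (Fin n) R :=
  ⟨Matrix.transvection i j t, Matrix.det_transvection_of_ne i j hij t⟩

/-- The (absolute) elementary subgroup `E(n,R)`. -/
def elemGroup (n : ℕ) (R : Type*) [CommRing R] :
    Subgroup (Matrix.SpecialLinearGroup (Fin n) R) :=
  Subgroup.closure {x | ∃ (i j : Fin n) (h : i ≠ j) (t : R), x = elemSL n R i j h t}

/-- The unrelativised elementary subgroup `E(n,I)` of level `I`. -/
def elemGroupLevel (n : ℕ) (R : Type*) [CommRing R] (I : Ideal R) :
    Subgroup (Matrix.SpecialLinearGroup (Fin n) R) :=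
  Subgroup.closure {x | ∃ (i j : Fin n) (h : i ≠ j), ∃ c ∈ I, x = elemSL n R i j h c}

/-- The relative elementary subgroup `E(n,R,I)`: the normal closure of `E(n,I)`
in `E(n,R)`, generated by `E(n,R)`-conjugates of elementary matrices of level `I`. -/
def relElemGroup (n : ℕ) (R : Type*) [CommRing R] (I : Ideal R) :
    Subgroup (Matrix.SpecialLinearGroup (Fin n) R) :=
  Subgroup.closure {x | ∃ g ∈ elemGroup n R, ∃ (i j : Fin n) (h : i ≠ j),
    ∃ c ∈ I, x = g * elemSL n R i j h c * g⁻¹}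

section Aux

open Matrix

variable {n : ℕ} {R : Type*} [CommRing R]

private def EEmat (p q : Fin n) : Matrix (Fin n) (Fin n) R := single p q (1 : R)

private lemma transvection_eq' (p q : Fin n) (t : R) :
    transvection p q t = 1 + t • EEmat p q := by
  rw [transvection, EEmat, smul_single, smul_eq_mul, mul_one]

private lemma EEmat_mul_same (p q r : Fin n) :
    (EEmat p q : Matrix (Fin n) (Fin n) R) * EEmat q r = EEmat p r := by
  simp [EEmat, single_mul_single_same]

private lemma EEmat_mul_ne {q q' : Fin n} (h : q ≠ q') (p r : Fin n) :
    (EEmat p q : Matrix (Fin n) (Fin n) R) * EEmat q' r = 0 := by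
  simp [EEmat, single_mul_single_of_ne, h]

private lemma elemSL_inv (p q : Fin n) (h : p ≠ q) (u : R) :
    (elemSL n R p q h u)⁻¹ = elemSL n R p q h (-u) := by
  apply inv_eq_of_mul_eq_one_right
  apply Subtype.ext
  show transvection p q u * transvection p q (-u) = (1 : Matrix (Fin n) (Fin n) R)
  simp only [transvection_eq', mul_add, add_mul, one_mul, mul_one, smul_mul_assoc,
    mul_smul_comm, smul_smul, EEmat_mul_ne h.symm, smul_zero, add_zero]
  module

private lemma elemSL_mem_rel {I : Ideal R} {p q : Fin n} (h : p ≠ q) {t : R} (ht : t ∈ I) :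
    elemSL n R p q h t ∈ relElemGroup n R I := by
  apply Subgroup.subset_closure
  exact ⟨1, one_mem _, p, q, h, t, ht, by rw [one_mul, inv_one, mul_one]⟩

end Aux

theorem elem_commutes_with_elem_commutator (n : ℕ) (hn : 3 ≤ n) (R : Type*) [CommRing R]
    (A B : Ideal R) (i j k : Fin n) (hij : i ≠ j) (hki : k ≠ i) (hkj : k ≠ j)
    (a b : R) (ha : a ∈ A) (hb : b ∈ B) (c : R) :
    ⁅elemSL n R i k hki.symm c,
      ⁅elemSL n R i j hij a, elemSL n R j i hij.symm b⁆⁆ ∈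
    relElemGroup n R (A * B) := by
  have hik : i ≠ k := hki.symm
  have hjk : j ≠ k := hkj.symm
  have hji : j ≠ i := hij.symm
  have key : ⁅elemSL n R i k hki.symm c,
      ⁅elemSL n R i j hij a, elemSL n R j i hij.symm b⁆⁆
      = elemSL n R i k hki.symm (-(c*(a*b) + c*(a*b)*(a*b))) *
        elemSL n R j k hkj.symm (-(c*(a*(b*b)))) := by
    simp only [commutatorElement_def, mul_inv_rev, inv_inv, elemSL_inv]
    apply Subtype.ext
    simp only [Matrix.SpecialLinearGroup.coe_mul]
    simp only [elemSL, Matrix.SpecialLinearGroup.coe_mk]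
    simp only [transvection_eq', mul_add, add_mul, one_mul, mul_one,
      smul_mul_assoc, mul_smul_comm, smul_smul,
      EEmat_mul_same, EEmat_mul_ne hij, EEmat_mul_ne hji, EEmat_mul_ne hik,
      EEmat_mul_ne hjk, EEmat_mul_ne hki, EEmat_mul_ne hkj,
      smul_zero, add_zero, zero_add, mul_zero, zero_mul]
    module
  rw [key]
  have hab : a * b ∈ A * B := Ideal.mul_mem_mul ha hb
  refine mul_mem (elemSL_mem_rel _ ?_) (elemSL_mem_rel _ ?_)
  · exact neg_mem (add_mem (Ideal.mul_mem_left _ c hab)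
      (Ideal.mul_mem_left _ (c*(a*b)) hab))
  · exact neg_mem (Ideal.mul_mem_left _ c
      (Ideal.mul_mem_mul ha (Ideal.mul_mem_left _ b hb)))
end

section
/- Let R be a commutative ring with ideals A, B, and n ≥ 3. For a ∈ A, b ∈ B, c ∈ R and indices i ≠ j, the elementary commutator satisfies the symbol-type relation [Eᵢⱼ(ac), Eⱼᵢ(b)] ≡ [Eᵢⱼ(a), Eⱼᵢ(cb)] modulo E(n,R,AB). -/
open scoped commutatorElement

namespace ElemAux

open Matrix

variable {n : ℕ} {R : Type*} [CommRing R]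

/-! ### Matrix-level Steinberg relations -/

lemma trans_steinberg (a b c : Fin n) (hab : a ≠ b) (hbc : b ≠ c) (hac : a ≠ c) (u v : R) :
    transvection a b u * transvection b c v
      = transvection b c v * transvection a b u * transvection a c (u * v) := by
  simp only [transvection, Matrix.add_mul, Matrix.mul_add, Matrix.one_mul, Matrix.mul_one,
    Matrix.single_mul_single_same, Matrix.single_mul_single_of_ne, hab, hbc, hac, hab.symm, hbc.symm,
    hac.symm, ne_eq, not_false_eq_true, add_zero]
  abel

lemma trans_comm (a b c d : Fin n) (h1 : b ≠ c) (h2 : d ≠ a) (u v : R) :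
    transvection a b u * transvection c d v = transvection c d v * transvection a b u := by
  simp only [transvection, Matrix.add_mul, Matrix.mul_add, Matrix.one_mul, Matrix.mul_one,
    Matrix.single_mul_single_of_ne, h1, h2, ne_eq, not_false_eq_true, add_zero]
  abel

/-! ### `elemSL`-level relations -/

lemma elemSL_steinberg (a b c : Fin n) (hab : a ≠ b) (hbc : b ≠ c) (hac : a ≠ c) (u v : R) :
    elemSL n R a b hab u * elemSL n R b c hbc v
      = elemSL n R b c hbc v * elemSL n R a b hab u * elemSL n R a c hac (u * v) := by
  apply Subtype.ext
  show transvection a b u * transvection b c v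
      = transvection b c v * transvection a b u * transvection a c (u * v)
  exact trans_steinberg a b c hab hbc hac u v

lemma elemSL_comm (a b c d : Fin n) (hab : a ≠ b) (hcd : c ≠ d) (h1 : b ≠ c) (h2 : d ≠ a)
    (u v : R) :
    elemSL n R a b hab u * elemSL n R c d hcd v = elemSL n R c d hcd v * elemSL n R a b hab u := by
  apply Subtype.ext
  show transvection a b u * transvection c d v = transvection c d v * transvection a b u
  exact trans_comm a b c d h1 h2 u v

lemma elemSL_inv (a b : Fin n) (hab : a ≠ b) (u : R) :
    (elemSL n R a b hab u)⁻¹ = elemSL n R a b hab (-u) := by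
  apply inv_eq_of_mul_eq_one_right
  apply Subtype.ext
  show transvection a b u * transvection a b (-u) = (1 : Matrix (Fin n) (Fin n) R)
  rw [transvection_mul_transvection_same _ _ hab, add_neg_cancel, transvection_zero]

/-! ### Subgroup lemmas -/

lemma mem_elemGroup (i j : Fin n) (h : i ≠ j) (t : R) : elemSL n R i j h t ∈ elemGroup n R :=
  Subgroup.subset_closure ⟨i, j, h, t, rfl⟩

lemma conj_mem_rel {I : Ideal R} {g x : Matrix.SpecialLinearGroup (Fin n) R}
    (hg : g ∈ elemGroup n R) (hx : x ∈ relElemGroup n R I) :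
    g * x * g⁻¹ ∈ relElemGroup n R I := by
  have hmap : (relElemGroup n R I).map (MulAut.conj g).toMonoidHom ≤ relElemGroup n R I := by
    rw [relElemGroup, MonoidHom.map_closure]
    refine Subgroup.closure_le _ |>.2 ?_
    rintro _ ⟨y, ⟨g', hg', i', j', hij', c', hc', rfl⟩, rfl⟩
    refine Subgroup.subset_closure ⟨g * g', mul_mem hg hg', i', j', hij', c', hc', ?_⟩
    simp [MulAut.conj_apply, mul_assoc]
  have h1 : (MulAut.conj g).toMonoidHom x ∈ (relElemGroup n R I).map (MulAut.conj g).toMonoidHom :=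
    Subgroup.mem_map_of_mem _ hx
  have h2 := hmap h1
  simpa [MulAut.conj_apply, mul_assoc] using h2

lemma rel_le_elem {I : Ideal R} : relElemGroup n R I ≤ elemGroup n R := by
  rw [relElemGroup]
  refine Subgroup.closure_le _ |>.2 ?_
  rintro _ ⟨g, hg, i, j, h, c, hc, rfl⟩
  exact mul_mem (mul_mem hg (mem_elemGroup i j h c)) (inv_mem hg)

instance relNormal (I : Ideal R) :
    ((relElemGroup n R I).subgroupOf (elemGroup n R)).Normal := by
  constructor
  intro x hx g
  rw [Subgroup.mem_subgroupOf] at hx ⊢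
  simpa using conj_mem_rel g.2 hx

/-- The quotient `E(n,R)/E(n,R,I)`. -/
abbrev relQuot (n : ℕ) (R : Type*) [CommRing R] (I : Ideal R) :=
  elemGroup n R ⧸ (relElemGroup n R I).subgroupOf (elemGroup n R)

/-- The image of an elementary matrix in the quotient. -/
def eps (I : Ideal R) (i j : Fin n) (h : i ≠ j) (t : R) : relQuot n R I :=
  QuotientGroup.mk ⟨elemSL n R i j h t, mem_elemGroup i j h t⟩

lemma eps_one {I : Ideal R} (i j : Fin n) (h : i ≠ j) {t : R} (ht : t ∈ I) :
    eps I i j h t = 1 := by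
  rw [eps, QuotientGroup.eq_one_iff, Subgroup.mem_subgroupOf]
  exact Subgroup.subset_closure ⟨1, one_mem _, i, j, h, t, ht, by group⟩

lemma eps_steinberg {I : Ideal R} (a b c : Fin n) (hab : a ≠ b) (hbc : b ≠ c) (hac : a ≠ c)
    (u v : R) :
    eps I a b hab u * eps I b c hbc v
      = eps I b c hbc v * eps I a b hab u * eps I a c hac (u * v) := by
  simp only [eps, ← QuotientGroup.mk_mul]
  congr 1
  apply Subtype.ext
  exact elemSL_steinberg a b c hab hbc hac u v

lemma eps_comm {I : Ideal R} (a b c d : Fin n) (hab : a ≠ b) (hcd : c ≠ d) (h1 : b ≠ c)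
    (h2 : d ≠ a) (u v : R) :
    eps I a b hab u * eps I c d hcd v = eps I c d hcd v * eps I a b hab u := by
  simp only [eps, ← QuotientGroup.mk_mul]
  congr 1
  apply Subtype.ext
  exact elemSL_comm a b c d hab hcd h1 h2 u v

lemma eps_inv {I : Ideal R} (a b : Fin n) (hab : a ≠ b) (u : R) :
    (eps I a b hab u)⁻¹ = eps I a b hab (-u) := by
  simp only [eps, ← QuotientGroup.mk_inv]
  congr 1
  apply Subtype.ext
  exact elemSL_inv a b hab u

lemma eps_commutator {I : Ideal R} (a b c d : Fin n) (hab : a ≠ b) (hcd : c ≠ d) (u v : R) :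
    ⁅eps I a b hab u, eps I c d hcd v⁆
      = QuotientGroup.mk ⟨⁅elemSL n R a b hab u, elemSL n R c d hcd v⁆,
          by rw [commutatorElement_def]
             exact mul_mem (mul_mem (mul_mem (mem_elemGroup a b hab u) (mem_elemGroup c d hcd v))
               (inv_mem (mem_elemGroup a b hab u))) (inv_mem (mem_elemGroup c d hcd v))⟩ := by
  have : (QuotientGroup.mk' ((relElemGroup n R I).subgroupOf (elemGroup n R)))
      ⁅(⟨elemSL n R a b hab u, mem_elemGroup a b hab u⟩ : elemGroup n R),
        ⟨elemSL n R c d hcd v, mem_elemGroup c d hcd v⟩⁆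
      = ⁅eps I a b hab u, eps I c d hcd v⁆ := map_commutatorElement _ _ _
  rw [← this]
  congr 1

lemma mem_of_quot_eq {I : Ideal R} {x y : Matrix.SpecialLinearGroup (Fin n) R}
    (hx : x ∈ elemGroup n R) (hy : y ∈ elemGroup n R)
    (h : (QuotientGroup.mk ⟨x, hx⟩ : relQuot n R I) = QuotientGroup.mk ⟨y, hy⟩) :
    x * y⁻¹ ∈ relElemGroup n R I := by
  rw [QuotientGroup.eq, Subgroup.mem_subgroupOf] at h
  have h' : x⁻¹ * y ∈ relElemGroup n R I := by simpa using h
  have h2 : y⁻¹ * x ∈ relElemGroup n R I := by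
    have := inv_mem h'
    simpa using this
  have h3 := conj_mem_rel hx h2
  have h4 : x * (y⁻¹ * x) * x⁻¹ = x * y⁻¹ := by group
  rwa [h4] at h3

/-! ### The key computation in the quotient -/

lemma key_quot (A B : Ideal R) (i j k : Fin n) (hij : i ≠ j) (hik : i ≠ k) (hjk : j ≠ k)
    (α β γ : R) (hα : α ∈ A) (hβ : β ∈ B) :
    ⁅eps (A * B) i j hij (α * γ), eps (A * B) j i hij.symm β⁆
      = ⁅(eps (A * B) i k hik α)⁻¹, eps (A * B) k i hik.symm (-(γ * β))⁆ := by
  set p := eps (A * B) i k hik α with hp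
  set q := eps (A * B) k j hjk.symm γ with hq
  set w := eps (A * B) j i hij.symm β with hw
  set s := eps (A * B) k i hik.symm (-(γ * β)) with hs
  set m := eps (A * B) i j hij (α * γ) with hm
  -- ideal memberships
  have hαβ : α * β ∈ A * B := Ideal.mul_mem_mul hα hβ
  have hβα : β * α ∈ A * B := by rw [mul_comm β α]; exact hαβ
  have hbig : -(γ * β) * (α * γ) ∈ A * B := by
    rw [show -(γ * β) * (α * γ) = -(γ * γ) * (α * β) by ring]
    exact Ideal.mul_mem_left _ _ hαβ
  -- basic relations
  have hpq : p * q = q * p * m := by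
    rw [hp, hq, hm]
    exact eps_steinberg i k j hik hjk.symm hij α γ
  have hqw : q * w = w * (q * s⁻¹) := by
    rw [hq, hw, hs, eps_steinberg k j i hjk.symm hij.symm hik.symm γ β, eps_inv, neg_neg,
      mul_assoc]
  have cwp : w * p = p * w := by
    rw [hw, hp, eps_steinberg j i k hij.symm hik hjk β α, eps_one j k hjk hβα, mul_one]
  have Cwp : Commute w p := cwp
  have csm : s * m = m * s := by
    rw [hs, hm, eps_steinberg k i j hik.symm hij hjk.symm (-(γ * β)) (α * γ),
      eps_one k j hjk.symm hbig, mul_one]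
  have Csm : Commute s m := csm
  have csw : s * w = w * s := by
    rw [hs, hw]
    exact eps_comm k i j i hik.symm hij.symm hij hik (-(γ * β)) β
  have Cws : Commute w s := (Commute.symm csw : Commute w s)
  -- derived relations
  have hmdef : m = p⁻¹ * (q⁻¹ * (p * q)) := by rw [hpq]; group
  have hq'w : q⁻¹ * w = w * (s * q⁻¹) := by
    rw [inv_mul_eq_iff_eq_mul, ← mul_assoc, hqw]
    group
  have swap_pw : ∀ x, p * (w * x) = w * (p * x) := fun x => by
    rw [← mul_assoc, ← cwp, mul_assoc]
  have swap_p'w : ∀ x, p⁻¹ * (w * x) = w * (p⁻¹ * x) := fun x => by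
    rw [← mul_assoc, ← (Cwp.inv_right).eq, mul_assoc]
  have hq'w' : ∀ x, q⁻¹ * (w * x) = w * (s * (q⁻¹ * x)) := fun x => by
    rw [← mul_assoc, hq'w]
    group
  have hqpq_base : q⁻¹ * (p * q) = p * m := by rw [hpq]; group
  have hqpq : ∀ x, q⁻¹ * (p * (q * x)) = p * (m * x) := fun x => by
    rw [show q⁻¹ * (p * (q * x)) = (q⁻¹ * (p * q)) * x by group, hqpq_base]
    group
  -- the main chain
  have main : m * w = w * (p⁻¹ * (s * (p * (s⁻¹ * m)))) := by
    calc m * w = p⁻¹ * (q⁻¹ * (p * (q * w))) := by rw [hmdef]; group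
      _ = p⁻¹ * (q⁻¹ * (p * (w * (q * s⁻¹)))) := by rw [hqw]
      _ = p⁻¹ * (q⁻¹ * (w * (p * (q * s⁻¹)))) := by rw [swap_pw]
      _ = p⁻¹ * (w * (s * (q⁻¹ * (p * (q * s⁻¹))))) := by rw [hq'w']
      _ = w * (p⁻¹ * (s * (q⁻¹ * (p * (q * s⁻¹))))) := by rw [swap_p'w]
      _ = w * (p⁻¹ * (s * (p * (m * s⁻¹)))) := by rw [hqpq]
      _ = w * (p⁻¹ * (s * (p * (s⁻¹ * m)))) := by rw [(Csm.symm.inv_right).eq]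
  have Cw : Commute w (p⁻¹ * (s * (p * s⁻¹))) :=
    (Cwp.inv_right).mul_right (Cws.mul_right (Cwp.mul_right Cws.inv_right))
  calc ⁅m, w⁆ = m * w * m⁻¹ * w⁻¹ := commutatorElement_def m w
    _ = w * (p⁻¹ * (s * (p * (s⁻¹ * m)))) * m⁻¹ * w⁻¹ := by rw [main]
    _ = w * (p⁻¹ * (s * (p * s⁻¹))) * w⁻¹ := by
        simp only [mul_assoc, mul_inv_cancel_left]
    _ = (p⁻¹ * (s * (p * s⁻¹))) * w * w⁻¹ := by rw [Cw.eq]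
    _ = ⁅p⁻¹, s⁆ := by
        rw [commutatorElement_def, inv_inv]
        simp only [mul_assoc, mul_inv_cancel, mul_one]

end ElemAux

theorem elem_commutator_symbol_relation (n : ℕ) (hn : 3 ≤ n) (R : Type*) [CommRing R]
    (A B : Ideal R) (i j : Fin n) (hij : i ≠ j)
    (a b c : R) (ha : a ∈ A) (hb : b ∈ B) :
    ⁅elemSL n R i j hij (a * c), elemSL n R j i hij.symm b⁆ *
      ⁅elemSL n R i j hij a, elemSL n R j i hij.symm (c * b)⁆⁻¹ ∈
    relElemGroup n R (A * B) := by
  classical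
  -- find a third index
  obtain ⟨k, hik, hjk⟩ : ∃ k : Fin n, i ≠ k ∧ j ≠ k := by
    by_contra h
    push_neg at h
    have hsub : (Finset.univ : Finset (Fin n)) ⊆ {i, j} := by
      intro x _
      rcases eq_or_ne i x with rfl | hne
      · simp
      · simp [(h x hne).symm]
    have hcard := Finset.card_le_card hsub
    have h2 : ({i, j} : Finset (Fin n)).card ≤ 2 := by
      apply le_trans (Finset.card_insert_le i {j})
      simp
    rw [Finset.card_univ, Fintype.card_fin] at hcard
    omega
  have h1 := ElemAux.key_quot A B i j k hij hik hjk a b c ha hb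
  have h2 := ElemAux.key_quot A B i j k hij hik hjk a (c * b) 1 ha (Ideal.mul_mem_left _ c hb)
  rw [mul_one, one_mul] at h2
  have h3 := h1.trans h2.symm
  rw [ElemAux.eps_commutator, ElemAux.eps_commutator] at h3
  exact ElemAux.mem_of_quot_eq _ _ h3
end
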